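/- Let k ≥ 1, h ≥ 0 be integers, and define for θ ≥ 0 the partition function Z_h(θ) = Σ_{x ∈ {±1}^k} exp(−(θ/2)·(S(x) + h)²) where S(x) = x_1 + ⋯ + x_k. Then for all θ ≥ θ' ≥ 0, Z_h(θ')/Z_{h+2}(θ') ≤ Z_h(θ)/Z_{h+2}(θ); equivalently, the ratio Z_h(θ)/Z_{h+2}(θ) is non-decreasing in θ. -/

import Mathlib

/-- The spin value of a Boolean configuration entry. -/
def spin (b : Bool) : ℝ := if b then 1 else -1

/-- Partition function of the antiferromagnetic Curie–Weiss model with field offset `h`: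
`Z_h(θ) = Σ_{x ∈ {±1}^k} exp(-(θ/2)(S(x) + h)²)` where `S(x) = Σ_i x_i`. -/
noncomputable def cwZ (k : ℕ) (h : ℕ) (θ : ℝ) : ℝ :=
  ∑ x : Fin k → Bool, Real.exp (-(θ / 2) * ((∑ i, spin (x i)) + (h : ℝ)) ^ 2)

namespace CWAux

/-- Integer spin sum of a configuration. -/
def intS {k : ℕ} (x : Fin k → Bool) : ℤ := ∑ i, (if x i then 1 else -1)

/-- Number of configurations with spin sum `s`. -/
def NN (k : ℕ) (s : ℤ) : ℕ :=
  (Finset.univ.filter (fun x : Fin k → Bool => intS x = s)).card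

/-- Folded kernel. -/
def HH (k : ℕ) (j c : ℤ) : ℕ := NN k (j - c) + NN k (j + c)

/-- Number of configurations with `|S(x) + a| = j`. -/
def cA (k : ℕ) (a : ℤ) (j : ℕ) : ℕ :=
  (Finset.univ.filter (fun x : Fin k → Bool => (intS x + a).natAbs = j)).card

lemma NN_card (k : ℕ) (s : ℤ) :
    NN k s = ∑ x : Fin k → Bool, if intS x = s then 1 else 0 := by
  classical
  simpa [NN] using Finset.card_filter (fun x : Fin k → Bool => intS x = s) Finset.univ

lemma intS_not {k : ℕ} (x : Fin k → Bool) : intS (fun i => !(x i)) = -intS x := by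
  unfold intS
  rw [← Finset.sum_neg_distrib]
  apply Finset.sum_congr rfl
  intro i _
  cases hxi : x i <;> simp [hxi]

lemma NN_neg (k : ℕ) (s : ℤ) : NN k (-s) = NN k s := by
  classical
  rw [NN_card, NN_card]
  refine Fintype.sum_equiv ⟨fun x i => !(x i), fun x i => !(x i), fun x => by funext i; simp,
    fun x => by funext i; simp⟩ _ _ ?_
  intro x
  simp only [Equiv.coe_fn_mk, intS_not]
  exact if_congr (by omega) rfl rfl

lemma intS_succ {k : ℕ} (x : Fin (k + 1) → Bool) :
    intS x = (if x 0 then 1 else -1) + intS (fun i => x i.succ) := by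
  unfold intS
  rw [Fin.sum_univ_succ]

lemma sum_cons_decomp {k : ℕ} (f : (Fin (k+1) → Bool) → ℕ) :
    ∑ x : Fin (k+1) → Bool, f x = ∑ p : Bool × (Fin k → Bool), f (Fin.cons p.1 p.2) := by
  apply Fintype.sum_equiv (Fin.consEquiv (fun _ : Fin (k+1) => Bool)).symm
  intro x
  simp [Fin.consEquiv]

lemma intS_cons {k : ℕ} (b : Bool) (v : Fin k → Bool) :
    intS (Fin.cons b v) = (if b then 1 else -1) + intS v := by
  unfold intS
  rw [Fin.sum_univ_succ]
  simp [Fin.cons_zero, Fin.cons_succ]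

lemma NN_succ (k : ℕ) (s : ℤ) : NN (k + 1) s = NN k (s - 1) + NN k (s + 1) := by
  classical
  rw [NN_card, NN_card, NN_card]
  rw [sum_cons_decomp (fun x => if intS x = s then (1:ℕ) else 0)]
  rw [Fintype.sum_prod_type, Fintype.sum_bool]
  congr 1
  · apply Finset.sum_congr rfl
    intro v _
    rw [intS_cons]
    simp only [if_true]
    exact if_congr (by omega) rfl rfl
  · apply Finset.sum_congr rfl
    intro v _
    rw [intS_cons]
    simp only [Bool.false_eq_true, if_false]
    exact if_congr (by omega) rfl rfl

lemma NN_zero (s : ℤ) : NN 0 s = if s = 0 then 1 else 0 := by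
  classical
  have hall : ∀ x : Fin 0 → Bool, intS x = 0 := by
    intro x; simp [intS]
  unfold NN
  by_cases hs : s = 0
  · subst hs
    rw [Finset.filter_true_of_mem (fun x _ => hall x)]
    simp [Finset.card_univ]
  · rw [Finset.filter_false_of_mem (fun x _ => by rw [hall x]; omega)]
    simp [hs]

lemma HH_neg (k : ℕ) (j c : ℤ) : HH k j (-c) = HH k j c := by
  unfold HH
  rw [show j - -c = j + c by ring, show j + -c = j - c by ring, Nat.add_comm]

lemma HH_succ (k : ℕ) (j c : ℤ) : HH (k + 1) j c = HH k j (c - 1) + HH k j (c + 1) := by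
  unfold HH
  rw [NN_succ, NN_succ,
    show j - c - 1 = j - (c + 1) by ring, show j - c + 1 = j - (c - 1) by ring,
    show j + c - 1 = j + (c - 1) by ring, show j + c + 1 = j + (c + 1) by ring]
  ring

/-- Core total-positivity (MLR) lemma for the folded kernel. -/
lemma HH_mlr (k : ℕ) : ∀ j l c c' : ℤ, 0 ≤ j → j ≤ l → 0 ≤ c → c ≤ c' → 2 ∣ (c' - c) →
    HH k j c' * HH k l c ≤ HH k j c * HH k l c' := by
  induction k with
  | zero =>
    intro j l c c' hj hjl hc hcc hd
    simp only [HH, NN_zero]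
    split_ifs <;> omega
  | succ k ih =>
    intro j l c c' hj hjl hc hcc hd
    rcases eq_or_lt_of_le hcc with rfl | hlt
    · exact le_refl _
    · have h2 : c + 2 ≤ c' := by omega
      rw [HH_succ, HH_succ, HH_succ, HH_succ]
      rcases eq_or_lt_of_le hc with rfl | hcpos
      · rw [show (0:ℤ) - 1 = -1 by ring, show (0:ℤ) + 1 = 1 by ring, HH_neg, HH_neg]
        have I1 := ih j l 1 (c' - 1) hj hjl (by omega) (by omega) (by omega)
        have I2 := ih j l 1 (c' + 1) hj hjl (by omega) (by omega) (by omega)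
        nlinarith [I1, I2]
      · have I11 := ih j l (c - 1) (c' - 1) hj hjl (by omega) (by omega) (by omega)
        have I12 := ih j l (c - 1) (c' + 1) hj hjl (by omega) (by omega) (by omega)
        have I21 := ih j l (c + 1) (c' - 1) hj hjl (by omega) (by omega) (by omega)
        have I22 := ih j l (c + 1) (c' + 1) hj hjl (by omega) (by omega) (by omega)
        nlinarith [I11, I12, I21, I22]

lemma cA_zero (k : ℕ) (a : ℤ) : cA k a 0 = NN k (-a) := by
  classical
  unfold cA NN
  congr 1
  apply Finset.filter_congr
  intro x _
  rw [Int.natAbs_eq_zero]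
  constructor <;> intro hx <;> omega

lemma cA_pos (k : ℕ) (a : ℤ) (j : ℕ) (hj : j ≠ 0) :
    cA k a j = NN k ((j : ℤ) - a) + NN k (-(j : ℤ) - a) := by
  classical
  unfold cA NN
  have hset : (Finset.univ.filter fun x : Fin k → Bool => (intS x + a).natAbs = j)
      = (Finset.univ.filter fun x : Fin k → Bool => intS x = (j : ℤ) - a)
        ∪ (Finset.univ.filter fun x : Fin k → Bool => intS x = -(j : ℤ) - a) := by
    rw [← Finset.filter_or]
    apply Finset.filter_congr
    intro x _
    rw [Int.natAbs_eq_iff]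
    constructor <;> intro hx <;> omega
  rw [hset, Finset.card_union_of_disjoint]
  rw [Finset.disjoint_left]
  intro x hx1 hx2
  simp only [Finset.mem_filter] at hx1 hx2
  have hjz : (j : ℤ) ≠ 0 := by exact_mod_cast hj
  omega

lemma cA_eq_HH (k : ℕ) (a : ℤ) (ha : 0 ≤ a) (j : ℕ) (hj : j ≠ 0) :
    cA k a j = HH k (j : ℤ) a := by
  rw [cA_pos k a j hj]
  unfold HH
  congr 1
  rw [show (-(j:ℤ) - a) = -((j:ℤ) + a) by ring, NN_neg]

lemma two_cA_zero_eq_HH (k : ℕ) (a : ℤ) : 2 * cA k a 0 = HH k 0 a := by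
  rw [cA_zero]
  unfold HH
  rw [show (0:ℤ) - a = -a by ring, show (0:ℤ) + a = a by ring]
  rw [show NN k a = NN k (-a) by rw [NN_neg]]
  ring

/-- MLR for the folded counts with offsets `h` and `h+2`. -/
lemma cA_mlr (k h : ℕ) {j l : ℕ} (hjl : j ≤ l) :
    cA k ((h : ℕ) : ℤ) l * cA k (((h + 2 : ℕ)) : ℤ) j
      ≤ cA k ((h : ℕ) : ℤ) j * cA k (((h + 2 : ℕ)) : ℤ) l := by
  have hcast : (((h + 2 : ℕ)) : ℤ) = (h : ℤ) + 2 := by push_cast; ring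
  rcases Nat.eq_or_lt_of_le hjl with rfl | hlt
  · exact le_refl _
  have hl : l ≠ 0 := by omega
  have key := HH_mlr k (j : ℤ) (l : ℤ) (h : ℤ) ((h : ℤ) + 2)
    (by positivity) (by exact_mod_cast hjl) (by positivity) (by linarith) ⟨1, by ring⟩
  rcases Nat.eq_zero_or_pos j with rfl | hjpos
  · -- j = 0
    have e1 : cA k ((h : ℕ) : ℤ) l = HH k (l : ℤ) (h : ℤ) := cA_eq_HH k _ (by positivity) l hl
    have e2 : cA k (((h + 2 : ℕ)) : ℤ) l = HH k (l : ℤ) ((h : ℤ) + 2) := by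
      rw [hcast] at *; exact cA_eq_HH k _ (by positivity) l hl
    have e3 := two_cA_zero_eq_HH k ((h : ℕ) : ℤ)
    have e4 : 2 * cA k (((h + 2 : ℕ)) : ℤ) 0 = HH k 0 ((h : ℤ) + 2) := by
      rw [hcast] at *; exact two_cA_zero_eq_HH k _
    have key2 : HH k 0 ((h : ℤ) + 2) * HH k (l : ℤ) (h : ℤ)
        ≤ HH k 0 (h : ℤ) * HH k (l : ℤ) ((h : ℤ) + 2) := key
    rw [← e4, ← e3, ← e1, ← e2] at key2
    nlinarith [key2]
  · have hj : j ≠ 0 := by omega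
    have e1 : cA k ((h : ℕ) : ℤ) l = HH k (l : ℤ) (h : ℤ) := cA_eq_HH k _ (by positivity) l hl
    have e2 : cA k (((h + 2 : ℕ)) : ℤ) l = HH k (l : ℤ) ((h : ℤ) + 2) := by
      rw [hcast] at *; exact cA_eq_HH k _ (by positivity) l hl
    have e3 : cA k ((h : ℕ) : ℤ) j = HH k (j : ℤ) (h : ℤ) := cA_eq_HH k _ (by positivity) j hj
    have e4 : cA k (((h + 2 : ℕ)) : ℤ) j = HH k (j : ℤ) ((h : ℤ) + 2) := by
      rw [hcast] at *; exact cA_eq_HH k _ (by positivity) j hj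
    rw [e1, e2, e3, e4]
    nlinarith [key]

lemma spin_sum {k : ℕ} (x : Fin k → Bool) :
    (∑ i, spin (x i)) = ((intS x : ℤ) : ℝ) := by
  unfold intS
  rw [Int.cast_sum]
  apply Finset.sum_congr rfl
  intro i _
  cases x i <;> simp [spin]

lemma intS_natAbs_le {k : ℕ} (x : Fin k → Bool) : (intS x).natAbs ≤ k := by
  have h1 : |intS x| ≤ (k : ℤ) := by
    calc |intS x| ≤ ∑ i : Fin k, |if x i then (1:ℤ) else -1| :=
          Finset.abs_sum_le_sum_abs _ _
    _ = ∑ _i : Fin k, 1 := by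
          apply Finset.sum_congr rfl; intro i _; cases x i <;> simp
    _ = (k : ℤ) := by simp
  rw [Int.abs_eq_natAbs] at h1
  exact_mod_cast h1

/-- `cwZ` as a sum over the absolute field values. -/
lemma cwZ_eq (k : ℕ) (a : ℕ) (θ : ℝ) (M : ℕ) (hM : k + a + 1 ≤ M) :
    cwZ k a θ = ∑ j ∈ Finset.range M, (cA k (a : ℤ) j : ℝ) * Real.exp (-(θ / 2) * (j : ℝ) ^ 2) := by
  classical
  unfold cwZ
  rw [← Finset.sum_fiberwise_of_maps_to
    (g := fun x : Fin k → Bool => (intS x + (a : ℤ)).natAbs) (t := Finset.range M)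
    (fun x _ => by
      have h1 : (intS x + (a : ℤ)).natAbs ≤ (intS x).natAbs + ((a : ℤ)).natAbs :=
        Int.natAbs_add_le _ _
      have h2 := intS_natAbs_le x
      simp only [Int.natAbs_natCast] at h1
      refine Finset.mem_range.mpr ?_
      show (intS x + (a : ℤ)).natAbs < M
      omega)
    (fun x => Real.exp (-(θ / 2) * ((∑ i, spin (x i)) + (a : ℝ)) ^ 2))]
  apply Finset.sum_congr rfl
  intro j _
  have hterm : ∀ x ∈ Finset.univ.filter
      (fun x : Fin k → Bool => (intS x + (a : ℤ)).natAbs = j),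
      Real.exp (-(θ / 2) * ((∑ i, spin (x i)) + (a : ℝ)) ^ 2)
        = Real.exp (-(θ / 2) * (j : ℝ) ^ 2) := by
    intro x hx
    simp only [Finset.mem_filter] at hx
    congr 1
    have h1 : (∑ i, spin (x i)) + (a : ℝ) = ((intS x + (a : ℤ) : ℤ) : ℝ) := by
      rw [spin_sum]; push_cast; ring
    rw [h1]
    have h2 : ((intS x + (a : ℤ) : ℤ) : ℝ) ^ 2 = (((intS x + (a : ℤ)).natAbs : ℝ)) ^ 2 := by
      rw [Nat.cast_natAbs]
      push_cast
      rw [sq_abs]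
    rw [h2, hx.2]
  rw [Finset.sum_congr rfl hterm, Finset.sum_const, nsmul_eq_mul]
  rfl

lemma cwZ_pos (k : ℕ) (a : ℕ) (θ : ℝ) : 0 < cwZ k a θ := by
  unfold cwZ
  apply Finset.sum_pos
  · intro x _
    exact Real.exp_pos _
  · exact Finset.univ_nonempty

end CWAux

open CWAux in
/-- Monotonicity of the partition function ratio: for `θ ≥ θ' ≥ 0`,
`Z_h(θ')/Z_{h+2}(θ') ≤ Z_h(θ)/Z_{h+2}(θ)`. -/
theorem cw_partition_ratio_mono (k h : ℕ) (hk : 1 ≤ k) (θ θ' : ℝ)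
    (h0 : 0 ≤ θ') (h1 : θ' ≤ θ) :
    cwZ k h θ' / cwZ k (h + 2) θ' ≤ cwZ k h θ / cwZ k (h + 2) θ := by
  rw [div_le_div_iff₀ (cwZ_pos k (h + 2) θ') (cwZ_pos k (h + 2) θ)]
  set M := k + h + 5 with hMdef
  have hM1 : k + h + 1 ≤ M := by omega
  have hM2 : k + (h + 2) + 1 ≤ M := by omega
  rw [cwZ_eq k h θ' M hM1, cwZ_eq k (h + 2) θ M hM2, cwZ_eq k h θ M hM1,
    cwZ_eq k (h + 2) θ' M hM2]
  set A : ℕ → ℝ := fun j => (cA k ((h : ℕ) : ℤ) j : ℝ) with hA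
  set B : ℕ → ℝ := fun j => (cA k (((h + 2 : ℕ)) : ℤ) j : ℝ) with hB
  set E : ℝ → ℕ → ℝ := fun t j => Real.exp (-(t / 2) * (j : ℝ) ^ 2) with hE
  rw [Finset.sum_mul_sum, Finset.sum_mul_sum]
  rw [← sub_nonneg, ← Finset.sum_sub_distrib]
  simp only [← Finset.sum_sub_distrib]
  set D : ℕ → ℕ → ℝ := fun j l =>
    A j * E θ j * (B l * E θ' l) - A j * E θ' j * (B l * E θ l) with hD
  have key : ∀ j l : ℕ, 0 ≤ D j l + D l j := by
    intro j l
    have hexpand : D j l + D l j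
        = (A j * B l - A l * B j) * (E θ j * E θ' l - E θ' j * E θ l) := by
      simp only [hD]; ring
    have hcount : ∀ {a b : ℕ}, a ≤ b → A b * B a ≤ A a * B b := by
      intro a b hab
      have := cA_mlr k h hab
      simp only [hA, hB]
      exact_mod_cast this
    have hexp : ∀ {a b : ℕ}, a ≤ b → E θ' a * E θ b ≤ E θ a * E θ' b := by
      intro a b hab
      simp only [hE]
      rw [← Real.exp_add, ← Real.exp_add]
      apply Real.exp_le_exp.mpr
      have hsq : (a : ℝ) ^ 2 ≤ (b : ℝ) ^ 2 := by
        have : (a : ℝ) ≤ (b : ℝ) := by exact_mod_cast hab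
        nlinarith [Nat.cast_nonneg (α := ℝ) a]
      nlinarith [hsq, h1]
    rw [hexpand]
    rcases le_total j l with hjl | hlj
    · apply mul_nonneg
      · have := hcount hjl; linarith
      · have := hexp hjl; linarith
    · have ha : A j * B l - A l * B j ≤ 0 := by have := hcount hlj; linarith
      have hb : E θ j * E θ' l - E θ' j * E θ l ≤ 0 := by have := hexp hlj; linarith
      nlinarith [ha, hb]
  have h2S : 0 ≤ ∑ j ∈ Finset.range M, ∑ l ∈ Finset.range M, (D j l + D l j) := by
    apply Finset.sum_nonneg; intro j _
    apply Finset.sum_nonneg; intro l _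
    exact key j l
  have hsplit : ∑ j ∈ Finset.range M, ∑ l ∈ Finset.range M, (D j l + D l j)
      = (∑ j ∈ Finset.range M, ∑ l ∈ Finset.range M, D j l)
        + ∑ j ∈ Finset.range M, ∑ l ∈ Finset.range M, D l j := by
    rw [← Finset.sum_add_distrib]
    apply Finset.sum_congr rfl
    intro j _
    rw [← Finset.sum_add_distrib]
  have hcomm : (∑ j ∈ Finset.range M, ∑ l ∈ Finset.range M, D l j)
      = ∑ j ∈ Finset.range M, ∑ l ∈ Finset.range M, D j l := Finset.sum_comm
  rw [hsplit, hcomm] at h2S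
  linarith
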